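/- arXiv:1807.07167 — 5 statements merged into one kernel-verified Lean document; each statement's English description precedes it below -/
import Mathlib

section
/- Let G be a finite connected electrical network, let a be a vertex and Z a set of vertices not containing a, and let i be the unit current flowing from a to Z. Then for every edge {x,y} of G, the absolute value of the current satisfies |i(x,y)| ≤ 1. -/
open Finset

/-- **Unit current edge bound.** In a finite connected electrical network, if `i` is the unit
current flowing from `a` to `Z` (defined via Ohm's law from a voltage `v` that is harmonic off
`{a} ∪ Z` and vanishes on `Z`, with strength `1`), then `|i x y| ≤ 1` on every edge. -/
theorem stmt0 {V : Type*} [Fintype V] [DecidableEq V]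
    (G : SimpleGraph V) (hconn : G.Connected)
    (c : V → V → ℝ)
    (hsym : ∀ x y, c x y = c y x)
    (hpos : ∀ x y, G.Adj x y → 0 < c x y)
    (hzero : ∀ x y, ¬ G.Adj x y → c x y = 0)
    (a : V) (Z : Set V) (haZ : a ∉ Z) (hZ : Z.Nonempty)
    (v : V → ℝ)
    (hv0 : ∀ z ∈ Z, v z = 0)
    (hharm : ∀ x, x ≠ a → x ∉ Z → (∑ y, c x y) * v x = ∑ y, c x y * v y)
    (i : V → V → ℝ)
    (hOhm : ∀ x y, i x y = c x y * (v x - v y))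
    (hstrength : ∑ y, i a y = 1) :
    ∀ x y, G.Adj x y → |i x y| ≤ 1 := by
  classical
  -- conductances are nonnegative
  have hc : ∀ x y, 0 ≤ c x y := by
    intro x y
    by_cases h : G.Adj x y
    · exact (hpos x y h).le
    · rw [hzero x y h]
  -- antisymmetry of the current
  have hanti : ∀ x y, i x y = - i y x := by
    intro x y
    rw [hOhm, hOhm, hsym x y]; ring
  -- divergence
  set d : V → ℝ := fun x => ∑ y, i x y with hd
  have hda : d a = 1 := hstrength
  have hd0 : ∀ x, x ≠ a → x ∉ Z → d x = 0 := by
    intro x hxa hxZ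
    have h := hharm x hxa hxZ
    simp only [hd, hOhm, mul_sub]
    rw [Finset.sum_sub_distrib, ← Finset.sum_mul, h, sub_self]
  -- minimum principle: voltages are nonnegative
  have hvnn : ∀ x, 0 ≤ v x := by
    by_contra hcon
    push_neg at hcon
    obtain ⟨x1, hx1⟩ := hcon
    obtain ⟨x0, -, hx0⟩ := Finset.exists_min_image Finset.univ v ⟨x1, Finset.mem_univ x1⟩
    have hm : v x0 < 0 := lt_of_le_of_lt (hx0 x1 (Finset.mem_univ x1)) hx1
    obtain ⟨z0, hz0⟩ := hZ
    obtain ⟨p⟩ := hconn x0 z0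
    have key : ∀ (x z : V) (_ : G.Walk x z), z ∈ Z → v x = v x0 → False := by
      intro x z p
      induction p with
      | nil =>
          intro hzZ hx
          rw [hv0 _ hzZ] at hx
          exact absurd hx.symm (ne_of_lt hm)
      | @cons x b _ h q ih =>
          intro hzZ hx
          have hxZ : x ∉ Z := by
            intro hxZ
            rw [hv0 x hxZ] at hx
            exact absurd hx.symm (ne_of_lt hm)
          have hxa : x ≠ a := by
            intro hxa
            subst hxa
            have hle : ∑ y, i x y ≤ 0 := by
              apply Finset.sum_nonpos
              intro y _
              rw [hOhm]
              apply mul_nonpos_of_nonneg_of_nonpos (hc x y)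
              have := hx0 y (Finset.mem_univ y)
              rw [sub_nonpos, hx]
              exact this
            linarith [hstrength]
          have hsum : ∑ y, c x y * (v y - v x) = 0 := by
            have h' := hharm x hxa hxZ
            simp only [mul_sub]
            rw [Finset.sum_sub_distrib, ← Finset.sum_mul, h', sub_self]
          have hterm : ∀ y ∈ Finset.univ, (0:ℝ) ≤ c x y * (v y - v x) := by
            intro y _
            apply mul_nonneg (hc x y)
            rw [sub_nonneg, hx]
            exact hx0 y (Finset.mem_univ y)
          have hb : c x b * (v b - v x) = 0 :=
            (Finset.sum_eq_zero_iff_of_nonneg hterm).1 hsum b (Finset.mem_univ b)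
          have hcb : 0 < c x b := hpos x b h
          have hvb : v b = v x := by
            have := mul_eq_zero.1 hb
            rcases this with h' | h'
            · exact absurd h' (ne_of_gt hcb)
            · linarith [sub_eq_zero.1 h']
          exact ih hzZ (hvb.trans hx)
    exact key x0 z0 p hz0 rfl
  -- key estimate for edges with strictly decreasing voltage
  have key2 : ∀ x y, G.Adj x y → v y < v x → i x y ≤ 1 := by
    intro x y hadj hlt
    set S : Finset V := Finset.univ.filter (fun u => v x ≤ v u) with hS
    have hxS : x ∈ S := by simp [hS]
    have hyS : y ∉ S := by simp [hS]; linarith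
    have hvx : 0 < v x := lt_of_le_of_lt (hvnn y) hlt
    -- the current across the cut equals the total divergence inside S
    have h2 : ∑ u ∈ S, ∑ w ∈ S, i u w = 0 := by
      have h3 : ∑ u ∈ S, ∑ w ∈ S, i u w = ∑ u ∈ S, ∑ w ∈ S, (- i u w) := by
        rw [Finset.sum_comm]
        exact Finset.sum_congr rfl fun u _ => Finset.sum_congr rfl fun w _ => hanti w u
      simp only [Finset.sum_neg_distrib] at h3
      linarith
    have hF : ∑ u ∈ S, ∑ w ∈ Sᶜ, i u w = ∑ u ∈ S, d u := by
      have h1 : ∀ u, d u = ∑ w ∈ Sᶜ, i u w + ∑ w ∈ S, i u w := by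
        intro u
        simp only [hd]
        rw [← Finset.sum_compl_add_sum S (fun w => i u w)]
      calc ∑ u ∈ S, ∑ w ∈ Sᶜ, i u w
          = ∑ u ∈ S, (∑ w ∈ Sᶜ, i u w + ∑ w ∈ S, i u w) - ∑ u ∈ S, ∑ w ∈ S, i u w := by
            rw [Finset.sum_add_distrib]; ring
        _ = ∑ u ∈ S, d u := by rw [h2]; simp only [← h1]; ring
    have hdS : ∑ u ∈ S, d u ≤ 1 := by
      have hcongr : ∀ u ∈ S, d u = if u = a then 1 else 0 := by
        intro u huS
        by_cases hu : u = a
        · simp [hu, hda]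
        · simp only [hu, if_false]
          apply hd0 u hu
          intro huZ
          have h1 := hv0 u huZ
          have h2 : v x ≤ v u := by
            have := (Finset.mem_filter.1 huS).2
            exact this
          linarith
      rw [Finset.sum_congr rfl hcongr, Finset.sum_ite_eq' S a (fun _ => (1:ℝ))]
      split_ifs <;> norm_num
    have hcross : ∀ u ∈ S, ∀ w ∈ Sᶜ, 0 ≤ i u w := by
      intro u hu w hw
      rw [hOhm]
      apply mul_nonneg (hc u w)
      have hu' : v x ≤ v u := (Finset.mem_filter.1 hu).2
      have hw' : ¬ (v x ≤ v w) := by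
        have := Finset.mem_compl.1 hw
        simpa [hS] using this
      push_neg at hw'
      linarith
    have h4 : i x y ≤ ∑ w ∈ Sᶜ, i x w :=
      Finset.single_le_sum (fun w hw => hcross x hxS w hw) (Finset.mem_compl.2 hyS)
    have h5 : ∑ w ∈ Sᶜ, i x w ≤ ∑ u ∈ S, ∑ w ∈ Sᶜ, i u w :=
      Finset.single_le_sum (fun u hu => Finset.sum_nonneg (fun w hw => hcross u hu w hw)) hxS
    linarith [hF, hdS]
  -- conclude
  intro x y hadj
  rcases lt_trichotomy (v x) (v y) with h | h | h
  · have habs : |i x y| = i y x := by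
      rw [hanti x y, abs_neg]
      apply abs_of_nonneg
      rw [hOhm]
      exact mul_nonneg (hc y x) (by linarith)
    rw [habs]
    exact key2 y x hadj.symm h
  · rw [hOhm, h]; simp
  · rw [abs_of_nonneg (by rw [hOhm]; exact mul_nonneg (hc x y) (by linarith))]
    exact key2 x y hadj h
end

section
/- Let G be a finite connected graph with two conductance assignments c and c' on its edges satisfying c(e) ≤ c'(e) for all edges e. Then for any vertex a and any set of vertices Z not containing a, the effective conductance satisfies C_c(a ↔ Z) ≤ C_{c'}(a ↔ Z). -/
open Finset

/-- **Rayleigh's monotonicity principle.** For a finite connected graph with two conductance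
assignments `c ≤ c'`, the effective conductance from `a` to `Z` (expressed via the Dirichlet
variational principle as the infimum of the energies of potentials equal to `1` at `a` and `0`
on `Z`) is monotone: `C_c(a ↔ Z) ≤ C_{c'}(a ↔ Z)`. -/
theorem stmt1 {V : Type*} [Fintype V]
    (G : SimpleGraph V) (hconn : G.Connected)
    (c c' : V → V → ℝ)
    (hsym : ∀ x y, c x y = c y x) (hsym' : ∀ x y, c' x y = c' y x)
    (hpos : ∀ x y, G.Adj x y → 0 < c x y) (hpos' : ∀ x y, G.Adj x y → 0 < c' x y)
    (hzero : ∀ x y, ¬ G.Adj x y → c x y = 0) (hzero' : ∀ x y, ¬ G.Adj x y → c' x y = 0)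
    (hle : ∀ x y, c x y ≤ c' x y)
    (a : V) (Z : Set V) (haZ : a ∉ Z) (hZ : Z.Nonempty) :
    sInf {E : ℝ | ∃ f : V → ℝ, f a = 1 ∧ (∀ z ∈ Z, f z = 0) ∧
        E = (1/2) * ∑ x, ∑ y, c x y * (f x - f y)^2}
      ≤ sInf {E : ℝ | ∃ f : V → ℝ, f a = 1 ∧ (∀ z ∈ Z, f z = 0) ∧
        E = (1/2) * ∑ x, ∑ y, c' x y * (f x - f y)^2} := by
  classical
  have hcnn : ∀ x y, 0 ≤ c x y := fun x y => by
    by_cases h : G.Adj x y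
    · exact (hpos x y h).le
    · exact (hzero x y h).ge
  set S := {E : ℝ | ∃ f : V → ℝ, f a = 1 ∧ (∀ z ∈ Z, f z = 0) ∧
        E = (1/2) * ∑ x, ∑ y, c x y * (f x - f y)^2} with hS
  set S' := {E : ℝ | ∃ f : V → ℝ, f a = 1 ∧ (∀ z ∈ Z, f z = 0) ∧
        E = (1/2) * ∑ x, ∑ y, c' x y * (f x - f y)^2} with hS'
  have hbdd : BddBelow S := by
    refine ⟨0, ?_⟩
    rintro E ⟨f, -, -, rfl⟩
    have : (0:ℝ) ≤ ∑ x, ∑ y, c x y * (f x - f y)^2 :=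
      Finset.sum_nonneg fun x _ => Finset.sum_nonneg fun y _ =>
        mul_nonneg (hcnn x y) (sq_nonneg _)
    linarith
  have hne' : S'.Nonempty := by
    refine ⟨_, fun x => if x = a then (1:ℝ) else 0, if_pos rfl, ?_, rfl⟩
    intro z hz
    exact if_neg (fun h => haZ (by rwa [h] at hz))
  refine le_csInf hne' ?_
  rintro E' ⟨f, hfa, hfZ, rfl⟩
  refine le_trans (csInf_le hbdd ⟨f, hfa, hfZ, rfl⟩) ?_
  have : ∑ x, ∑ y, c x y * (f x - f y)^2 ≤ ∑ x, ∑ y, c' x y * (f x - f y)^2 :=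
    Finset.sum_le_sum fun x _ => Finset.sum_le_sum fun y _ =>
      mul_le_mul_of_nonneg_right (hle x y) (sq_nonneg _)
  linarith
end

section
/- Consider the simple random walk on G = ℤ × Γ where Γ is a finite connected graph. Let a, b ∈ G be two vertices on the same level, i.e., with equal ℤ-coordinates. Then P_a(H_b ≤ 4⁶|Γ|⁶) ≥ 1/2, where H_b is the hitting time of b. -/
open MeasureTheory Finset
open scoped ENNReal Classical

/-- The cylinder graph `ℤ × Γ`: two vertices are adjacent if they are on the same level and
adjacent in `Γ`, or carry the same `Γ`-coordinate and sit on consecutive levels. -/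
def cylGraph {W : Type*} (Γ : SimpleGraph W) : SimpleGraph (ℤ × W) where
  Adj u v := (u.1 = v.1 ∧ Γ.Adj u.2 v.2) ∨ (u.2 = v.2 ∧ (v.1 = u.1 + 1 ∨ u.1 = v.1 + 1))
  symm := by
    constructor
    intro u v h
    rcases h with ⟨h1, h2⟩ | ⟨h1, h2⟩
    · exact Or.inl ⟨h1.symm, h2.symm⟩
    · exact Or.inr ⟨h1.symm, h2.symm⟩
  loopless := by
    constructor
    intro u h
    rcases h with ⟨_, h2⟩ | ⟨_, h2⟩
    · exact Γ.loopless.irrefl _ h2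
    · rcases h2 with h | h <;> omega

namespace Stmt3Aux
set_option linter.unusedSectionVars false
variable {W : Type*} [Fintype W]

noncomputable def box (z0 : ℤ) (L : ℕ) : Finset (ℤ × W) :=
  (Finset.Icc (z0 - L) (z0 + L)) ×ˢ Finset.univ

lemma mem_box {z0 : ℤ} {L : ℕ} {x : ℤ × W} :
    x ∈ box z0 L ↔ z0 - L ≤ x.1 ∧ x.1 ≤ z0 + L := by
  simp [box, Finset.mem_product]

noncomputable def cond (Γ : SimpleGraph W) (z0 : ℤ) (L : ℕ) (x y : ℤ × W) : ℝ :=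
  (if y.1 = x.1 ∧ Γ.Adj x.2 y.2 then 1 else 0)
  + (if y.2 = x.2 ∧ ((y.1 = x.1 + 1 ∧ x.1 + 1 ≤ z0 + L) ∨ (y.1 = x.1 - 1 ∧ z0 - L ≤ x.1 - 1))
      then 1 else 0)
  + (if y = x ∧ (x.1 = z0 - L ∨ x.1 = z0 + L) then 1 else 0)

noncomputable def deg2 (Γ : SimpleGraph W) (x : ℤ × W) : ℝ := (Γ.degree x.2 : ℝ) + 2

noncomputable def rho (Γ : SimpleGraph W) (z0 : ℤ) (L : ℕ) (x y : ℤ × W) : ℝ :=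
  cond Γ z0 L x y / deg2 Γ x

variable (Γ : SimpleGraph W) (z0 : ℤ) (L : ℕ)

lemma cond_nonneg (x y : ℤ × W) : 0 ≤ cond Γ z0 L x y := by
  unfold cond; positivity

lemma cond_symm {x y : ℤ × W} (hx : x ∈ box z0 L) (hy : y ∈ box z0 L) :
    cond Γ z0 L x y = cond Γ z0 L y x := by
  rw [mem_box] at hx hy
  unfold cond
  congr 1
  · congr 1
    · by_cases h : y.1 = x.1 ∧ Γ.Adj x.2 y.2
      · rw [if_pos h, if_pos ⟨h.1.symm, h.2.symm⟩]
      · rw [if_neg h, if_neg (fun h' => h ⟨h'.1.symm, h'.2.symm⟩)]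
    · by_cases h : y.2 = x.2 ∧
        ((y.1 = x.1 + 1 ∧ x.1 + 1 ≤ z0 + L) ∨ (y.1 = x.1 - 1 ∧ z0 - L ≤ x.1 - 1))
      · rw [if_pos h, if_pos ⟨h.1.symm, by rcases h.2 with ⟨h1, h2⟩ | ⟨h1, h2⟩ <;> omega⟩]
      · rw [if_neg h, if_neg]
        intro h'
        exact h ⟨h'.1.symm, by rcases h'.2 with ⟨h1, h2⟩ | ⟨h1, h2⟩ <;> omega⟩
  · by_cases h : y = x ∧ (x.1 = z0 - L ∨ x.1 = z0 + L)
    · rw [if_pos h, if_pos ⟨h.1.symm, h.1 ▸ h.2⟩]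
    · rw [if_neg h, if_neg]
      rintro ⟨h1, h2⟩
      exact h ⟨h1.symm, h1 ▸ h2⟩

lemma deg2_pos (x : ℤ × W) : 0 < deg2 Γ x := by
  unfold deg2; positivity

lemma rho_nonneg (x y : ℤ × W) : 0 ≤ rho Γ z0 L x y :=
  div_nonneg (cond_nonneg _ _ _ _ _) (deg2_pos Γ x).le


lemma cond_sum (hL : 0 < L) {x : ℤ × W} (hx : x ∈ box z0 L) (f : ℤ × W → ℝ) :
    ∑ y ∈ box z0 L, cond Γ z0 L x y * f y
      = (∑ γ ∈ Γ.neighborFinset x.2, f (x.1, γ))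
        + (if x.1 + 1 ≤ z0 + L then f (x.1 + 1, x.2) else f x)
        + (if z0 - L ≤ x.1 - 1 then f (x.1 - 1, x.2) else f x) := by
  rw [mem_box] at hx
  have hxbox : x ∈ box z0 L := mem_box.2 hx
  simp only [cond, add_mul, Finset.sum_add_distrib]
  have sum_pt : ∀ v : ℤ × W, v ∈ box z0 L →
      ∀ g : ℤ × W → ℝ, ∑ y ∈ box z0 L, (if y = v then g y else 0) = g v := by
    intro v hv g
    rw [Finset.sum_ite_eq' (box z0 L) v g, if_pos hv]
  -- first piece
  have hA : ∑ y ∈ box z0 L, (if y.1 = x.1 ∧ Γ.Adj x.2 y.2 then (1:ℝ) else 0) * f y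
      = ∑ γ ∈ Γ.neighborFinset x.2, f (x.1, γ) := by
    rw [box, Finset.sum_product]
    rw [Finset.sum_eq_single_of_mem x.1 (by rw [Finset.mem_Icc]; exact hx)]
    · simp only [eq_self_iff_true, true_and, ite_mul, one_mul, zero_mul]
      rw [SimpleGraph.neighborFinset_eq_filter, Finset.sum_filter]
    · intro z hz hne
      apply Finset.sum_eq_zero
      intro γ _
      rw [if_neg (by simp [hne]), zero_mul]
  -- second piece
  have hB : ∑ y ∈ box z0 L,
        (if y.2 = x.2 ∧ ((y.1 = x.1 + 1 ∧ x.1 + 1 ≤ z0 + L) ∨ (y.1 = x.1 - 1 ∧ z0 - L ≤ x.1 - 1))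
          then (1:ℝ) else 0) * f y
      = (if x.1 + 1 ≤ z0 + L then f (x.1 + 1, x.2) else 0)
        + (if z0 - L ≤ x.1 - 1 then f (x.1 - 1, x.2) else 0) := by
    have key : ∀ y : ℤ × W,
        (if y.2 = x.2 ∧ ((y.1 = x.1 + 1 ∧ x.1 + 1 ≤ z0 + L) ∨ (y.1 = x.1 - 1 ∧ z0 - L ≤ x.1 - 1))
          then (1:ℝ) else 0) * f y
        = (if x.1 + 1 ≤ z0 + L then (if y = (x.1 + 1, x.2) then f y else 0) else 0)
          + (if z0 - L ≤ x.1 - 1 then (if y = (x.1 - 1, x.2) then f y else 0) else 0) := by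
      intro y
      have hiff : (y.2 = x.2 ∧ ((y.1 = x.1 + 1 ∧ x.1 + 1 ≤ z0 + L) ∨
          (y.1 = x.1 - 1 ∧ z0 - L ≤ x.1 - 1)))
          ↔ ((y = (x.1 + 1, x.2) ∧ x.1 + 1 ≤ z0 + L) ∨
             (y = (x.1 - 1, x.2) ∧ z0 - L ≤ x.1 - 1)) := by
        constructor
        · rintro ⟨h2, ⟨h1, hc⟩ | ⟨h1, hc⟩⟩
          · exact Or.inl ⟨Prod.ext h1 h2, hc⟩
          · exact Or.inr ⟨Prod.ext h1 h2, hc⟩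
        · rintro (⟨h1, hc⟩ | ⟨h1, hc⟩) <;> rw [h1] <;> exact ⟨rfl, by omega⟩
      rw [if_congr hiff rfl rfl]
      by_cases c1 : x.1 + 1 ≤ z0 + L <;> by_cases c2 : z0 - L ≤ x.1 - 1
      · by_cases hy1 : y = (x.1 + 1, x.2) <;> by_cases hy2 : y = (x.1 - 1, x.2)
        · exact absurd (hy1 ▸ hy2) (by simp [Prod.ext_iff]; omega)
        · rw [if_pos (Or.inl ⟨hy1, c1⟩), if_pos c1, if_pos c2, if_pos hy1, if_neg hy2,
            one_mul, add_zero]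
        · rw [if_pos (Or.inr ⟨hy2, c2⟩), if_pos c1, if_pos c2, if_neg hy1, if_pos hy2,
            one_mul, zero_add]
        · rw [if_neg (by rintro (⟨h, _⟩ | ⟨h, _⟩) <;> [exact hy1 h; exact hy2 h]),
            if_pos c1, if_pos c2, if_neg hy1, if_neg hy2, zero_mul, add_zero]
      · by_cases hy1 : y = (x.1 + 1, x.2)
        · rw [if_pos (Or.inl ⟨hy1, c1⟩), if_pos c1, if_neg c2, if_pos hy1, one_mul, add_zero]
        · rw [if_neg (by rintro (⟨h, _⟩ | ⟨_, h⟩) <;> [exact hy1 h; exact c2 h]),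
            if_pos c1, if_neg c2, if_neg hy1, zero_mul, add_zero]
      · by_cases hy2 : y = (x.1 - 1, x.2)
        · rw [if_pos (Or.inr ⟨hy2, c2⟩), if_neg c1, if_pos c2, if_pos hy2, one_mul, zero_add]
        · rw [if_neg (by rintro (⟨_, h⟩ | ⟨h, _⟩) <;> [exact c1 h; exact hy2 h]),
            if_neg c1, if_pos c2, if_neg hy2, zero_mul, zero_add]
      · rw [if_neg (by rintro (⟨_, h⟩ | ⟨_, h⟩) <;> [exact c1 h; exact c2 h]),
          if_neg c1, if_neg c2, zero_mul, add_zero]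
    rw [Finset.sum_congr rfl (fun y _ => key y), Finset.sum_add_distrib]
    congr 1
    · by_cases h1 : x.1 + 1 ≤ z0 + L
      · simp only [h1, if_true]
        exact sum_pt _ (mem_box.2 ⟨by omega, by omega⟩) f
      · simp [h1]
    · by_cases h2 : z0 - L ≤ x.1 - 1
      · simp only [h2, if_true]
        exact sum_pt _ (mem_box.2 ⟨by omega, by omega⟩) f
      · simp [h2]
  -- third piece
  have hC : ∑ y ∈ box z0 L, (if y = x ∧ (x.1 = z0 - L ∨ x.1 = z0 + L) then (1:ℝ) else 0) * f y
      = (if x.1 = z0 - L ∨ x.1 = z0 + L then f x else 0) := by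
    by_cases hw : x.1 = z0 - L ∨ x.1 = z0 + L
    · simp only [hw, and_true, if_true, ite_mul, one_mul, zero_mul]
      exact sum_pt x hxbox f
    · simp [hw]
  rw [hA, hB, hC]
  have hLL : (0:ℤ) < (L:ℤ) := by exact_mod_cast hL
  by_cases h1 : x.1 + 1 ≤ z0 + L <;> by_cases h2 : z0 - L ≤ x.1 - 1 <;>
    simp only [h1, h2, if_true, if_false] <;>
    [skip; skip; skip; omega] <;>
    simp only [show (x.1 = z0 - L ∨ x.1 = z0 + L) ↔ (¬(x.1 + 1 ≤ z0 + L) ∨ ¬(z0 - L ≤ x.1 - 1))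
        from by omega] <;>
    simp [h1, h2] <;> ring


lemma deg2_ne (x : ℤ × W) : deg2 Γ x ≠ 0 := (deg2_pos Γ x).ne'

lemma deg2_ge_two (x : ℤ × W) : 2 ≤ deg2 Γ x := by
  unfold deg2
  have : (0:ℝ) ≤ (Γ.degree x.2 : ℝ) := by positivity
  linarith

lemma rho_stochastic (hL : 0 < L) {x : ℤ × W} (hx : x ∈ box z0 L) :
    ∑ y ∈ box z0 L, rho Γ z0 L x y = 1 := by
  have : ∑ y ∈ box z0 L, rho Γ z0 L x y
      = (∑ y ∈ box z0 L, cond Γ z0 L x y * 1) / deg2 Γ x := by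
    rw [Finset.sum_div]
    exact Finset.sum_congr rfl fun y _ => by rw [mul_one]; rfl
  rw [this, cond_sum Γ z0 L hL hx]
  have hdeg : ∑ γ ∈ Γ.neighborFinset x.2, (1:ℝ) = (Γ.degree x.2 : ℝ) := by
    rw [Finset.sum_const, SimpleGraph.degree]; simp
  rw [hdeg, ite_self, ite_self]
  unfold deg2
  rw [div_eq_one_iff_eq (by unfold deg2 at *; positivity)]
  ring

lemma rho_stationary (hL : 0 < L) {y : ℤ × W} (hy : y ∈ box z0 L) :
    ∑ x ∈ box z0 L, deg2 Γ x * rho Γ z0 L x y = deg2 Γ y := by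
  have h1 : ∀ x ∈ box z0 L, deg2 Γ x * rho Γ z0 L x y = deg2 Γ y * rho Γ z0 L y x := by
    intro x hx
    rw [rho, rho, mul_div_cancel₀ _ (deg2_ne Γ x), cond_symm Γ z0 L hx hy,
      mul_div_cancel₀ _ (deg2_ne Γ y)]
  rw [Finset.sum_congr rfl h1, ← Finset.mul_sum, rho_stochastic Γ z0 L hL hy, mul_one]

/-- Survival: probability to avoid `c` during the first `t` steps of the reflected chain. -/
noncomputable def sv (Γ : SimpleGraph W) (z0 : ℤ) (L : ℕ) (c : ℤ × W) : ℕ → (ℤ × W) → ℝ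
  | 0, x => if x = c then 0 else 1
  | (t+1), x => if x = c then 0 else ∑ y ∈ box z0 L, rho Γ z0 L x y * sv Γ z0 L c t y

lemma sv_nonneg (c : ℤ × W) (t : ℕ) (x : ℤ × W) : 0 ≤ sv Γ z0 L c t x := by
  induction t generalizing x with
  | zero => rw [sv]; split <;> norm_num
  | succ t ih =>
    rw [sv]; split
    · exact le_refl 0
    · exact Finset.sum_nonneg fun y _ => mul_nonneg (rho_nonneg Γ z0 L x y) (ih y)

lemma sv_self (c : ℤ × W) (t : ℕ) : sv Γ z0 L c t c = 0 := by
  cases t <;> rw [sv] <;> simp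

lemma sv_le_one (hL : 0 < L) (c : ℤ × W) (t : ℕ) : ∀ x ∈ box z0 L, sv Γ z0 L c t x ≤ 1 := by
  induction t with
  | zero => intro x _; rw [sv]; split <;> norm_num
  | succ t ih =>
    intro x hx
    rw [sv]; split
    · norm_num
    · calc ∑ y ∈ box z0 L, rho Γ z0 L x y * sv Γ z0 L c t y
          ≤ ∑ y ∈ box z0 L, rho Γ z0 L x y * 1 := by
            refine Finset.sum_le_sum fun y hy => ?_
            exact mul_le_mul_of_nonneg_left (ih y hy) (rho_nonneg Γ z0 L x y)
        _ = 1 := by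
            simp only [mul_one]; exact rho_stochastic Γ z0 L hL hx

lemma sv_antitone (hL : 0 < L) (c : ℤ × W) (t : ℕ) :
    ∀ x ∈ box z0 L, sv Γ z0 L c (t+1) x ≤ sv Γ z0 L c t x := by
  induction t with
  | zero =>
    intro x hx
    conv_lhs => rw [sv]
    rw [sv]
    split
    · exact le_refl 0
    · calc ∑ y ∈ box z0 L, rho Γ z0 L x y * sv Γ z0 L c 0 y
          ≤ ∑ y ∈ box z0 L, rho Γ z0 L x y * 1 := by
            refine Finset.sum_le_sum fun y hy => ?_
            exact mul_le_mul_of_nonneg_left (sv_le_one Γ z0 L hL c 0 y hy)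
              (rho_nonneg Γ z0 L x y)
        _ = 1 := by simp only [mul_one]; exact rho_stochastic Γ z0 L hL hx
  | succ t ih =>
    intro x hx
    conv_lhs => rw [sv]
    conv_rhs => rw [sv]
    split
    · exact le_refl 0
    · refine Finset.sum_le_sum fun y hy => ?_
      exact mul_le_mul_of_nonneg_left (ih y hy) (rho_nonneg Γ z0 L x y)

lemma sv_mono_le (hL : 0 < L) (c : ℤ × W) {s t : ℕ} (hst : s ≤ t) :
    ∀ x ∈ box z0 L, sv Γ z0 L c t x ≤ sv Γ z0 L c s x := by
  induction t with
  | zero => intro x hx; rw [Nat.le_zero.1 hst]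
  | succ t ih =>
    intro x hx
    rcases Nat.lt_or_ge s (t+1) with h | h
    · exact le_trans (sv_antitone Γ z0 L hL c t x hx) (ih (Nat.lt_succ_iff.1 h) x hx)
    · rw [Nat.le_antisymm hst h]

/-- Truncated expected hitting time `E_x[H_c ∧ T]`. -/
noncomputable def hT (Γ : SimpleGraph W) (z0 : ℤ) (L : ℕ) (c : ℤ × W) (T : ℕ) (x : ℤ × W) : ℝ :=
  ∑ t ∈ Finset.range T, sv Γ z0 L c t x

lemma hT_nonneg (c : ℤ × W) (T : ℕ) (x : ℤ × W) : 0 ≤ hT Γ z0 L c T x :=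
  Finset.sum_nonneg fun t _ => sv_nonneg Γ z0 L c t x

lemma hT_self (c : ℤ × W) (T : ℕ) : hT Γ z0 L c T c = 0 := by
  unfold hT
  exact Finset.sum_eq_zero fun t _ => sv_self Γ z0 L c t

lemma hT_mono (c : ℤ × W) (T : ℕ) (x : ℤ × W) :
    hT Γ z0 L c T x ≤ hT Γ z0 L c (T+1) x := by
  unfold hT
  rw [Finset.sum_range_succ]
  have := sv_nonneg Γ z0 L c T x
  linarith

lemma hT_succ (c : ℤ × W) (T : ℕ) {x : ℤ × W} (hx : x ≠ c) :
    hT Γ z0 L c (T+1) x = 1 + ∑ y ∈ box z0 L, rho Γ z0 L x y * hT Γ z0 L c T y := by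
  unfold hT
  rw [Finset.sum_range_succ']
  have h0 : sv Γ z0 L c 0 x = 1 := by rw [sv, if_neg hx]
  have hstep : ∀ t, sv Γ z0 L c (t+1) x = ∑ y ∈ box z0 L, rho Γ z0 L x y * sv Γ z0 L c t y := by
    intro t; rw [sv, if_neg hx]
  rw [h0, Finset.sum_congr rfl fun t _ => hstep t, add_comm]
  congr 1
  rw [Finset.sum_comm]
  exact Finset.sum_congr rfl fun y _ => by rw [← Finset.mul_sum]

lemma sv_le_hT_div (hL : 0 < L) (c : ℤ × W) (T : ℕ) {x : ℤ × W} (hx : x ∈ box z0 L) :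
    (T : ℝ) * sv Γ z0 L c T x ≤ hT Γ z0 L c T x := by
  unfold hT
  calc (T : ℝ) * sv Γ z0 L c T x = ∑ t ∈ Finset.range T, sv Γ z0 L c T x := by
        rw [Finset.sum_const, Finset.card_range, nsmul_eq_mul]
    _ ≤ ∑ t ∈ Finset.range T, sv Γ z0 L c t x :=
        Finset.sum_le_sum fun t ht =>
          sv_mono_le Γ z0 L hL c (Finset.mem_range.1 ht).le x hx

/-- Kac-type bound: truncated hitting time of `c` from a Γ-neighbour `u` on the same level
is at most the total conductance of the box. -/
lemma hT_adjacent (hL : 0 < L) {c u : ℤ × W} (hc : c ∈ box z0 L) (hu : u ∈ box z0 L)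
    (h1 : u.1 = c.1) (h2 : Γ.Adj c.2 u.2) (T : ℕ) :
    hT Γ z0 L c T u ≤ ∑ x ∈ box z0 L, deg2 Γ x := by
  set A : ℕ → ℝ := fun t => ∑ x ∈ box z0 L, deg2 Γ x * sv Γ z0 L c t x with hA
  set ret : ℕ → ℝ := fun t => ∑ y ∈ box z0 L, rho Γ z0 L c y * sv Γ z0 L c t y with hret
  have hstep : ∀ t, A (t+1) = A t - deg2 Γ c * ret t := by
    intro t
    have e1 : A (t+1) = ∑ x ∈ (box z0 L).erase c,
        deg2 Γ x * (∑ y ∈ box z0 L, rho Γ z0 L x y * sv Γ z0 L c t y) := by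
      show ∑ x ∈ box z0 L, deg2 Γ x * sv Γ z0 L c (t+1) x = _
      have hzero : deg2 Γ c * sv Γ z0 L c (t+1) c = 0 := by rw [sv_self, mul_zero]
      have h1 : ∑ x ∈ box z0 L, deg2 Γ x * sv Γ z0 L c (t+1) x
          = ∑ x ∈ (box z0 L).erase c, deg2 Γ x * sv Γ z0 L c (t+1) x :=
        (Finset.sum_erase (box z0 L) hzero).symm
      rw [h1]
      refine Finset.sum_congr rfl fun x hx => ?_
      rw [sv, if_neg (Finset.ne_of_mem_erase hx)]
    have e2 : ∑ x ∈ (box z0 L).erase c,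
        deg2 Γ x * (∑ y ∈ box z0 L, rho Γ z0 L x y * sv Γ z0 L c t y)
        = (∑ x ∈ box z0 L, deg2 Γ x * (∑ y ∈ box z0 L, rho Γ z0 L x y * sv Γ z0 L c t y))
          - deg2 Γ c * ret t := by
      rw [Finset.sum_erase_eq_sub hc, hret]
    have e3 : ∑ x ∈ box z0 L, deg2 Γ x * (∑ y ∈ box z0 L, rho Γ z0 L x y * sv Γ z0 L c t y)
        = A t := by
      show _ = ∑ x ∈ box z0 L, deg2 Γ x * sv Γ z0 L c t x
      have swap : ∀ x ∈ box z0 L, deg2 Γ x * (∑ y ∈ box z0 L, rho Γ z0 L x y * sv Γ z0 L c t y)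
          = ∑ y ∈ box z0 L, (deg2 Γ x * rho Γ z0 L x y) * sv Γ z0 L c t y := by
        intro x _
        rw [Finset.mul_sum]
        exact Finset.sum_congr rfl fun y _ => by ring
      rw [Finset.sum_congr rfl swap, Finset.sum_comm]
      refine Finset.sum_congr rfl fun y hy => ?_
      rw [← Finset.sum_mul, rho_stationary Γ z0 L hL hy]
    rw [e1, e2, e3]
  have htel : ∀ T, A T = A 0 - deg2 Γ c * ∑ t ∈ Finset.range T, ret t := by
    intro T
    induction T with
    | zero => simp
    | succ T ih => rw [hstep T, ih, Finset.sum_range_succ]; ring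
  have hAnonneg : ∀ t, 0 ≤ A t :=
    fun t => Finset.sum_nonneg fun x _ =>
      mul_nonneg (deg2_pos Γ x).le (sv_nonneg Γ z0 L c t x)
  have hA0 : A 0 ≤ ∑ x ∈ box z0 L, deg2 Γ x := by
    refine Finset.sum_le_sum fun x hx => ?_
    calc deg2 Γ x * sv Γ z0 L c 0 x ≤ deg2 Γ x * 1 :=
          mul_le_mul_of_nonneg_left (sv_le_one Γ z0 L hL c 0 x hx) (deg2_pos Γ x).le
      _ = deg2 Γ x := mul_one _
  have hsum_ret : deg2 Γ c * ∑ t ∈ Finset.range T, ret t ≤ ∑ x ∈ box z0 L, deg2 Γ x := by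
    have := hAnonneg T
    rw [htel T] at this
    linarith
  -- pointwise: sv c t u ≤ deg2 c * ret t
  have hrcu : rho Γ z0 L c u = 1 / deg2 Γ c := by
    rw [rho]
    congr 1
    rw [cond]
    rw [if_pos ⟨h1, h2⟩, if_neg (by rintro ⟨hh, _⟩; exact h2.ne hh.symm),
      if_neg (by rintro ⟨hh, _⟩; exact h2.ne (congrArg Prod.snd hh).symm)]
    norm_num
  have hpt : ∀ t, sv Γ z0 L c t u ≤ deg2 Γ c * ret t := by
    intro t
    have : rho Γ z0 L c u * sv Γ z0 L c t u ≤ ret t := by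
      rw [hret]
      exact Finset.single_le_sum
        (f := fun y => rho Γ z0 L c y * sv Γ z0 L c t y)
        (fun y _ => mul_nonneg (rho_nonneg Γ z0 L c y) (sv_nonneg Γ z0 L c t y)) hu
    rw [hrcu] at this
    have hd := deg2_pos Γ c
    calc sv Γ z0 L c t u = deg2 Γ c * (1 / deg2 Γ c * sv Γ z0 L c t u) := by
          field_simp
      _ ≤ deg2 Γ c * ret t := mul_le_mul_of_nonneg_left this hd.le
  calc hT Γ z0 L c T u ≤ ∑ t ∈ Finset.range T, deg2 Γ c * ret t :=
        Finset.sum_le_sum fun t _ => hpt t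
    _ = deg2 Γ c * ∑ t ∈ Finset.range T, ret t := by rw [Finset.mul_sum]
    _ ≤ ∑ x ∈ box z0 L, deg2 Γ x := hsum_ret

/-- Triangle inequality for truncated expected hitting times. -/
lemma hT_triangle (hL : 0 < L) {y z : ℤ × W} (hy : y ∈ box z0 L) (T : ℕ) :
    ∀ x ∈ box z0 L, hT Γ z0 L z T x ≤ hT Γ z0 L y T x + hT Γ z0 L z T y := by
  induction T with
  | zero =>
    intro x hx
    unfold hT
    simp
  | succ T ih =>
    intro x hx
    by_cases hxz : x = z
    · rw [hxz, hT_self]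
      exact add_nonneg (hT_nonneg Γ z0 L _ _ _) (hT_nonneg Γ z0 L _ _ _)
    by_cases hxy : x = y
    · rw [hxy, hT_self, zero_add]
    rw [hT_succ Γ z0 L z T hxz, hT_succ Γ z0 L y T hxy]
    have step : ∑ y' ∈ box z0 L, rho Γ z0 L x y' * hT Γ z0 L z T y'
        ≤ ∑ y' ∈ box z0 L, rho Γ z0 L x y' * (hT Γ z0 L y T y' + hT Γ z0 L z T y) := by
      refine Finset.sum_le_sum fun y' hy' => ?_
      exact mul_le_mul_of_nonneg_left (ih y' hy') (rho_nonneg Γ z0 L x y')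
    have expand : ∑ y' ∈ box z0 L, rho Γ z0 L x y' * (hT Γ z0 L y T y' + hT Γ z0 L z T y)
        = (∑ y' ∈ box z0 L, rho Γ z0 L x y' * hT Γ z0 L y T y') + hT Γ z0 L z T y := by
      rw [Finset.sum_congr rfl fun y' (_ : y' ∈ box z0 L) =>
          mul_add (rho Γ z0 L x y') (hT Γ z0 L y T y') (hT Γ z0 L z T y),
        Finset.sum_add_distrib, ← Finset.sum_mul, rho_stochastic Γ z0 L hL hx, one_mul]
    have := hT_mono Γ z0 L z T y
    calc 1 + ∑ y' ∈ box z0 L, rho Γ z0 L x y' * hT Γ z0 L z T y'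
        ≤ 1 + ((∑ y' ∈ box z0 L, rho Γ z0 L x y' * hT Γ z0 L y T y') + hT Γ z0 L z T y) := by
          rw [← expand]; linarith
      _ ≤ 1 + (∑ y' ∈ box z0 L, rho Γ z0 L x y' * hT Γ z0 L y T y') + hT Γ z0 L z (T+1) y := by
          linarith

/-- Chaining along a walk in `Γ` at the centre level. -/
lemma hT_walk (hL : 0 < L) {α β : W} (p : Γ.Walk α β) (T : ℕ) :
    hT Γ z0 L (z0, β) T (z0, α) ≤ p.length * ∑ x ∈ box z0 L, deg2 Γ x := by
  induction p with
  | nil =>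
    rw [hT_self]
    simp
  | @cons γ γ' δ hadj p ih =>
    have hmem : ∀ w : W, ((z0, w) : ℤ × W) ∈ box z0 L := by
      intro w
      rw [mem_box]
      constructor <;> simp <;> omega
    have tri := hT_triangle Γ z0 L hL (y := (z0, γ')) (z := (z0, δ)) (hmem γ') T (z0, γ) (hmem γ)
    have adj := hT_adjacent Γ z0 L hL (c := (z0, γ')) (u := (z0, γ)) (hmem γ') (hmem γ)
      rfl hadj.symm T
    rw [SimpleGraph.Walk.length_cons]
    push_cast
    linarith

lemma rho_zsq (hL : 0 < L) {x : ℤ × W} (h1 : z0 - L < x.1) (h2 : x.1 < z0 + L) :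
    ∑ y ∈ box z0 L, rho Γ z0 L x y * ((y.1 - z0 : ℤ) : ℝ)^2
      ≤ ((x.1 - z0 : ℤ) : ℝ)^2 + 1 := by
  have hx : x ∈ box z0 L := mem_box.2 ⟨h1.le, h2.le⟩
  have hs : ∑ y ∈ box z0 L, rho Γ z0 L x y * ((y.1 - z0 : ℤ) : ℝ)^2
      = (∑ y ∈ box z0 L, cond Γ z0 L x y * ((y.1 - z0 : ℤ) : ℝ)^2) / deg2 Γ x := by
    rw [Finset.sum_div]
    exact Finset.sum_congr rfl fun y _ => by rw [rho, div_mul_eq_mul_div]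
  rw [hs, cond_sum Γ z0 L hL hx (fun y => ((y.1 - z0 : ℤ) : ℝ)^2)]
  rw [if_pos (by omega : x.1 + 1 ≤ z0 + L), if_pos (by omega : z0 - L ≤ x.1 - 1)]
  have hnb : ∑ γ ∈ Γ.neighborFinset x.2, (((x.1, γ).1 - z0 : ℤ) : ℝ)^2
      = (Γ.degree x.2 : ℝ) * ((x.1 - z0 : ℤ) : ℝ)^2 := by
    have hc : ∀ γ ∈ Γ.neighborFinset x.2,
        (((x.1, γ).1 - z0 : ℤ) : ℝ)^2 = ((x.1 - z0 : ℤ) : ℝ)^2 := fun _ _ => rfl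
    rw [Finset.sum_congr rfl hc, Finset.sum_const, nsmul_eq_mul, SimpleGraph.degree]
  rw [hnb]
  set z : ℝ := ((x.1 - z0 : ℤ) : ℝ) with hz
  have e1 : (((x.1 + 1, x.2).1 - z0 : ℤ) : ℝ) = z + 1 := by rw [hz]; push_cast; ring
  have e2 : (((x.1 - 1, x.2).1 - z0 : ℤ) : ℝ) = z - 1 := by rw [hz]; push_cast; ring
  rw [e1, e2]
  have hd2 : deg2 Γ x = (Γ.degree x.2 : ℝ) + 2 := rfl
  rw [div_le_iff₀ (deg2_pos Γ x), hd2]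
  have hdeg0 : (0:ℝ) ≤ (Γ.degree x.2 : ℝ) := by positivity
  nlinarith [sq_nonneg z, sq_nonneg (z+1), sq_nonneg (z-1)]

/-- Probability of touching a wall within `t` steps. -/
noncomputable def uu (Γ : SimpleGraph W) (z0 : ℤ) (L : ℕ) : ℕ → (ℤ × W) → ℝ
  | 0, x => if x.1 = z0 - L ∨ x.1 = z0 + L then 1 else 0
  | (t+1), x => if x.1 = z0 - L ∨ x.1 = z0 + L then 1
      else ∑ y ∈ box z0 L, rho Γ z0 L x y * uu Γ z0 L t y

lemma uu_nonneg (t : ℕ) (x : ℤ × W) : 0 ≤ uu Γ z0 L t x := by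
  induction t generalizing x with
  | zero => rw [uu]; split <;> norm_num
  | succ t ih =>
    rw [uu]; split
    · norm_num
    · exact Finset.sum_nonneg fun y _ => mul_nonneg (rho_nonneg Γ z0 L x y) (ih y)

lemma uu_wall (t : ℕ) {x : ℤ × W} (hw : x.1 = z0 - L ∨ x.1 = z0 + L) :
    uu Γ z0 L t x = 1 := by
  cases t <;> rw [uu, if_pos hw]

/-- Potential-function bound on the wall-touching probability. -/
lemma uu_le (hL : 0 < L) (t : ℕ) :
    ∀ x ∈ box z0 L, uu Γ z0 L t x * (L : ℝ)^2 ≤ ((x.1 - z0 : ℤ) : ℝ)^2 + t := by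
  induction t with
  | zero =>
    intro x hx
    rw [uu]
    split
    · rename_i hw
      have : ((x.1 - z0 : ℤ) : ℝ)^2 = (L : ℝ)^2 := by
        rcases hw with h | h <;> rw [h] <;> push_cast <;> ring
      rw [this]; norm_num
    · have h0 : (0:ℝ) ≤ ((x.1 - z0 : ℤ) : ℝ)^2 := sq_nonneg _
      push_cast at h0 ⊢
      linarith
  | succ t ih =>
    intro x hx
    rw [uu]
    split
    · rename_i hw
      have : ((x.1 - z0 : ℤ) : ℝ)^2 = (L : ℝ)^2 := by
        rcases hw with h | h <;> rw [h] <;> push_cast <;> ring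
      rw [this, one_mul]
      have h0 : (0:ℝ) ≤ ((t:ℕ) : ℝ) := by positivity
      push_cast at h0 ⊢
      linarith
    · rename_i hw
      rw [mem_box] at hx
      have h1 : z0 - L < x.1 := by omega
      have h2 : x.1 < z0 + L := by omega
      calc (∑ y ∈ box z0 L, rho Γ z0 L x y * uu Γ z0 L t y) * (L:ℝ)^2
          = ∑ y ∈ box z0 L, rho Γ z0 L x y * (uu Γ z0 L t y * (L:ℝ)^2) := by
            rw [Finset.sum_mul]; exact Finset.sum_congr rfl fun y _ => by ring
        _ ≤ ∑ y ∈ box z0 L, rho Γ z0 L x y * (((y.1 - z0 : ℤ) : ℝ)^2 + t) := by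
            refine Finset.sum_le_sum fun y hy => ?_
            exact mul_le_mul_of_nonneg_left (ih y hy) (rho_nonneg Γ z0 L x y)
        _ = (∑ y ∈ box z0 L, rho Γ z0 L x y * ((y.1 - z0 : ℤ) : ℝ)^2)
              + (t : ℝ) * ∑ y ∈ box z0 L, rho Γ z0 L x y := by
            rw [Finset.mul_sum, ← Finset.sum_add_distrib]
            exact Finset.sum_congr rfl fun y _ => by ring
        _ ≤ (((x.1 - z0 : ℤ) : ℝ)^2 + 1) + (t : ℝ) * 1 := by
            have := rho_zsq Γ z0 L hL h1 h2
            rw [rho_stochastic Γ z0 L hL (mem_box.2 ⟨h1.le, h2.le⟩)]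
            linarith
        _ = ((x.1 - z0 : ℤ) : ℝ)^2 + (t + 1 : ℕ) := by push_cast; ring

/-- Probability of hitting `b` within `t` steps strictly avoiding the walls. -/
noncomputable def vv (Γ : SimpleGraph W) (z0 : ℤ) (L : ℕ) (b : ℤ × W) : ℕ → (ℤ × W) → ℝ
  | 0, x => if x = b then 1 else 0
  | (t+1), x => if x = b then 1
      else if z0 - L < x.1 ∧ x.1 < z0 + L then
        ∑ y ∈ box z0 L, rho Γ z0 L x y * vv Γ z0 L b t y
      else 0

lemma vv_nonneg (b : ℤ × W) (t : ℕ) (x : ℤ × W) : 0 ≤ vv Γ z0 L b t x := by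
  induction t generalizing x with
  | zero => rw [vv]; split <;> norm_num
  | succ t ih =>
    rw [vv]
    split
    · norm_num
    split
    · exact Finset.sum_nonneg fun y _ => mul_nonneg (rho_nonneg Γ z0 L x y) (ih y)
    · exact le_refl 0

/-- Union bound: hit `b` avoiding walls ≥ hit `b` − touch wall. -/
lemma vv_ge (hL : 0 < L) (b : ℤ × W) (t : ℕ) :
    ∀ x ∈ box z0 L, 1 - sv Γ z0 L b t x - uu Γ z0 L t x ≤ vv Γ z0 L b t x := by
  induction t with
  | zero =>
    intro x hx
    rw [vv, sv, uu]
    by_cases hb : x = b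
    · rw [if_pos hb, if_pos hb]
      split <;> norm_num
    · rw [if_neg hb, if_neg hb]
      split <;> norm_num
  | succ t ih =>
    intro x hx
    rw [vv]
    by_cases hb : x = b
    · rw [if_pos hb]
      have h1 := sv_nonneg Γ z0 L b (t+1) x
      have h2 := uu_nonneg Γ z0 L (t+1) x
      linarith
    rw [if_neg hb]
    by_cases hin : z0 - L < x.1 ∧ x.1 < z0 + L
    · rw [if_pos hin]
      have hsv : sv Γ z0 L b (t+1) x = ∑ y ∈ box z0 L, rho Γ z0 L x y * sv Γ z0 L b t y := by
        rw [sv, if_neg hb]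
      have huu : uu Γ z0 L (t+1) x = ∑ y ∈ box z0 L, rho Γ z0 L x y * uu Γ z0 L t y := by
        rw [uu, if_neg (by omega)]
      rw [hsv, huu]
      have key : ∑ y ∈ box z0 L, rho Γ z0 L x y *
            (1 - sv Γ z0 L b t y - uu Γ z0 L t y)
          ≤ ∑ y ∈ box z0 L, rho Γ z0 L x y * vv Γ z0 L b t y := by
        refine Finset.sum_le_sum fun y hy => ?_
        exact mul_le_mul_of_nonneg_left (ih y hy) (rho_nonneg Γ z0 L x y)
      have expand : ∑ y ∈ box z0 L, rho Γ z0 L x y * (1 - sv Γ z0 L b t y - uu Γ z0 L t y)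
          = 1 - (∑ y ∈ box z0 L, rho Γ z0 L x y * sv Γ z0 L b t y)
              - ∑ y ∈ box z0 L, rho Γ z0 L x y * uu Γ z0 L t y := by
        have L1 : ∀ y ∈ box z0 L, rho Γ z0 L x y * (1 - sv Γ z0 L b t y - uu Γ z0 L t y)
            = rho Γ z0 L x y - rho Γ z0 L x y * sv Γ z0 L b t y
              - rho Γ z0 L x y * uu Γ z0 L t y := fun y _ => by ring
        rw [Finset.sum_congr rfl L1, Finset.sum_sub_distrib, Finset.sum_sub_distrib,
          rho_stochastic Γ z0 L hL hx]
      linarith [key, expand.symm.le]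
    · rw [if_neg hin]
      rw [mem_box] at hx
      have hw : x.1 = z0 - L ∨ x.1 = z0 + L := by omega
      rw [uu_wall Γ z0 L (t+1) hw]
      have := sv_nonneg Γ z0 L b (t+1) x
      linarith

/-- On interior states, the reflected kernel agrees with the cylinder-walk kernel. -/
lemma rho_eq_q (hL : 0 < L) {x : ℤ × W} (h1 : z0 - L < x.1) (h2 : x.1 < z0 + L)
    (y : ℤ × W) :
    rho Γ z0 L x y
      = (if (cylGraph Γ).Adj x y then 1 else 0) / ((Γ.degree x.2 : ℝ) + 2) := by
  rw [rho, deg2]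
  congr 1
  rw [cond]
  rw [if_neg (show ¬(y = x ∧ (x.1 = z0 - L ∨ x.1 = z0 + L)) from
    by rintro ⟨_, hw⟩; omega), add_zero]
  by_cases hΓ : y.1 = x.1 ∧ Γ.Adj x.2 y.2
  · rw [if_pos hΓ, if_neg (show ¬(y.2 = x.2 ∧ ((y.1 = x.1 + 1 ∧ x.1 + 1 ≤ z0 + L) ∨
        (y.1 = x.1 - 1 ∧ z0 - L ≤ x.1 - 1))) from
        by rintro ⟨hy2, _⟩; exact hΓ.2.ne hy2.symm), add_zero,
      if_pos (show (cylGraph Γ).Adj x y from Or.inl ⟨hΓ.1.symm, hΓ.2⟩)]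
  · rw [if_neg hΓ, zero_add]
    by_cases hV : y.2 = x.2 ∧ ((y.1 = x.1 + 1 ∧ x.1 + 1 ≤ z0 + L) ∨
        (y.1 = x.1 - 1 ∧ z0 - L ≤ x.1 - 1))
    · rw [if_pos hV, if_pos (show (cylGraph Γ).Adj x y from
        Or.inr ⟨hV.1.symm, by rcases hV.2 with ⟨h, _⟩ | ⟨h, _⟩ <;> omega⟩)]
    · rw [if_neg hV, if_neg (?_ : ¬ (cylGraph Γ).Adj x y)]
      rintro (⟨he, ha⟩ | ⟨he, hd⟩)
      · exact hΓ ⟨he.symm, ha⟩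
      · exact hV ⟨he.symm, by omega⟩

lemma rho_q_nonneg (x y : ℤ × W) :
    (0:ℝ) ≤ (if (cylGraph Γ).Adj x y then 1 else 0) / ((Γ.degree x.2 : ℝ) + 2) := by
  positivity


section Bridge

variable [MeasurableSpace W] [MeasurableSingletonClass W]
  {Ω : Type*} [MeasurableSpace Ω] (μ : Measure Ω) (S : ℕ → Ω → ℤ × W)

lemma meas_cyl (hmeas : ∀ n, Measurable (S n)) (n : ℕ) (w : Fin (n+1) → ℤ × W) :
    MeasurableSet {ω | ∀ k : Fin (n+1), S k ω = w k} := by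
  have : {ω | ∀ k : Fin (n+1), S k ω = w k} = ⋂ k : Fin (n+1), (S k) ⁻¹' {w k} := by
    ext ω; simp [Set.mem_iInter]
  rw [this]
  exact MeasurableSet.iInter fun k => (hmeas k) (measurableSet_singleton (w k))

lemma meas_ev (hmeas : ∀ n, Measurable (S n)) (b : ℤ × W) (n t : ℕ) :
    MeasurableSet {ω | ∃ m ≤ t, S (n + m) ω = b} := by
  have : {ω | ∃ m ≤ t, S (n + m) ω = b} = ⋃ m ∈ Finset.range (t+1), (S (n+m)) ⁻¹' {b} := by
    ext ω
    simp only [Set.mem_setOf_eq, Set.mem_iUnion, Finset.mem_range, Set.mem_preimage,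
      Set.mem_singleton_iff, Nat.lt_succ_iff, exists_prop]
  rw [this]
  exact MeasurableSet.biUnion (Finset.range (t+1)).countable_toSet
    fun m _ => (hmeas (n+m)) (measurableSet_singleton b)

lemma cyl_snoc (n : ℕ) (w : Fin (n+1) → ℤ × W) (y : ℤ × W) :
    {ω | ∀ k : Fin (n+1+1), S k ω = (Fin.snoc w y : Fin (n+1+1) → ℤ × W) k}
      = {ω | (∀ k : Fin (n+1), S k ω = w k) ∧ S (n+1) ω = y} := by
  ext ω
  simp only [Set.mem_setOf_eq]
  constructor
  · intro h
    refine ⟨fun k => ?_, ?_⟩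
    · have := h k.castSucc
      rwa [Fin.snoc_castSucc, Fin.coe_castSucc] at this
    · have := h (Fin.last (n+1))
      rwa [Fin.snoc_last, Fin.val_last] at this
  · rintro ⟨h1, h2⟩ k
    induction k using Fin.lastCases with
    | last => rw [Fin.snoc_last, Fin.val_last]; exact h2
    | cast k => rw [Fin.snoc_castSucc, Fin.coe_castSucc]; exact h1 k

lemma bridge (Γ : SimpleGraph W) (b : ℤ × W) (z0 : ℤ) (L : ℕ) (hL : 0 < L)
    (hmeas : ∀ n, Measurable (S n))
    (hwalk : ∀ (n : ℕ) (w : Fin (n+1) → ℤ × W) (y : ℤ × W),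
      μ {ω | (∀ k : Fin (n+1), S k ω = w k) ∧ S (n+1) ω = y}
        = μ {ω | ∀ k : Fin (n+1), S k ω = w k}
          * ENNReal.ofReal
            ((if (cylGraph Γ).Adj (w (Fin.last n)) y then 1 else 0)
              / (Γ.degree (w (Fin.last n)).2 + 2))) :
    ∀ (t n : ℕ) (w : Fin (n+1) → ℤ × W),
      ENNReal.ofReal (vv Γ z0 L b t (w (Fin.last n)))
          * μ {ω | ∀ k : Fin (n+1), S k ω = w k}
        ≤ μ ({ω | ∀ k : Fin (n+1), S k ω = w k} ∩ {ω | ∃ m ≤ t, S (n + m) ω = b}) := by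
  intro t
  induction t with
  | zero =>
    intro n w
    rw [vv]
    by_cases hb : w (Fin.last n) = b
    · rw [if_pos hb, ENNReal.ofReal_one, one_mul]
      refine measure_mono fun ω hω => ⟨hω, 0, le_refl 0, ?_⟩
      rw [Nat.add_zero]
      have := hω (Fin.last n)
      rwa [Fin.val_last, hb] at this
    · rw [if_neg hb, ENNReal.ofReal_zero, zero_mul]
      exact zero_le
  | succ t ih =>
    intro n w
    set x := w (Fin.last n) with hxdef
    rw [vv]
    by_cases hb : x = b
    · rw [if_pos hb, ENNReal.ofReal_one, one_mul]
      refine measure_mono fun ω hω => ⟨hω, 0, Nat.zero_le _, ?_⟩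
      rw [Nat.add_zero]
      have := hω (Fin.last n)
      rwa [Fin.val_last, ← hxdef, hb] at this
    rw [if_neg hb]
    by_cases hin : z0 - L < x.1 ∧ x.1 < z0 + L
    swap
    · rw [if_neg hin, ENNReal.ofReal_zero, zero_mul]
      exact zero_le
    rw [if_pos hin]
    set A := {ω | ∀ k : Fin (n+1), S k ω = w k} with hA
    set B : (ℤ × W) → Set Ω := fun y =>
      {ω | (∀ k : Fin (n+1), S k ω = w k) ∧ S (n+1) ω = y}
        ∩ {ω | ∃ m ≤ t, S ((n+1) + m) ω = b} with hB
    -- each piece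
    have key : ∀ y ∈ box z0 L,
        ENNReal.ofReal (rho Γ z0 L x y * vv Γ z0 L b t y) * μ A ≤ μ (B y) := by
      intro y hy
      have ih' := ih (n+1) (Fin.snoc w y)
      rw [Fin.snoc_last, cyl_snoc] at ih'
      have hq := hwalk n w y
      rw [← hxdef] at hq
      have hrq : ENNReal.ofReal (rho Γ z0 L x y)
          = ENNReal.ofReal ((if (cylGraph Γ).Adj x y then 1 else 0)
              / (Γ.degree x.2 + 2)) := by
        rw [rho_eq_q Γ z0 L hL hin.1 hin.2 y]
      calc ENNReal.ofReal (rho Γ z0 L x y * vv Γ z0 L b t y) * μ A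
          = ENNReal.ofReal (vv Γ z0 L b t y)
            * (μ A * ENNReal.ofReal (rho Γ z0 L x y)) := by
            rw [ENNReal.ofReal_mul (rho_nonneg Γ z0 L x y)]
            ring
        _ = ENNReal.ofReal (vv Γ z0 L b t y)
            * μ {ω | (∀ k : Fin (n+1), S k ω = w k) ∧ S (n+1) ω = y} := by
            rw [hrq, ← hq]
        _ ≤ μ (B y) := ih'
    -- summation
    have hsum : ENNReal.ofReal (∑ y ∈ box z0 L, rho Γ z0 L x y * vv Γ z0 L b t y) * μ A
        = ∑ y ∈ box z0 L, ENNReal.ofReal (rho Γ z0 L x y * vv Γ z0 L b t y) * μ A := by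
      rw [ENNReal.ofReal_sum_of_nonneg
        (fun y _ => mul_nonneg (rho_nonneg Γ z0 L x y) (vv_nonneg Γ z0 L b t y)),
        Finset.sum_mul]
    have hdisj : ((box z0 L : Finset (ℤ × W)) : Set (ℤ × W)).PairwiseDisjoint B := by
      intro y1 _ y2 _ hne
      refine Set.disjoint_left.2 fun ω h1 h2 => hne ?_
      have e1 := h1.1.2
      have e2 := h2.1.2
      rw [e1] at e2
      exact e2
    have hmeasB : ∀ y ∈ box z0 L, MeasurableSet (B y) := by
      intro y _
      refine MeasurableSet.inter ?_ (meas_ev S hmeas b (n+1) t)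
      have : {ω | (∀ k : Fin (n+1), S k ω = w k) ∧ S (n+1) ω = y}
          = {ω | ∀ k : Fin (n+1+1), S k ω = (Fin.snoc w y : Fin (n+1+1) → ℤ × W) k} :=
        (cyl_snoc S n w y).symm
      rw [this]
      exact meas_cyl S hmeas (n+1) (Fin.snoc w y)
    have hunion : ∑ y ∈ box z0 L, μ (B y) = μ (⋃ y ∈ box z0 L, B y) :=
      (measure_biUnion_finset hdisj hmeasB).symm
    have hsub : (⋃ y ∈ box z0 L, B y) ⊆ A ∩ {ω | ∃ m ≤ t + 1, S (n + m) ω = b} := by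
      rintro ω hω
      simp only [Set.mem_iUnion] at hω
      obtain ⟨y, _, ⟨hcyl, _⟩, m, hm, hS⟩ := hω
      refine ⟨hcyl, m + 1, by omega, ?_⟩
      rwa [show n + (m + 1) = n + 1 + m from by omega]
    calc ENNReal.ofReal (∑ y ∈ box z0 L, rho Γ z0 L x y * vv Γ z0 L b t y) * μ A
        = ∑ y ∈ box z0 L, ENNReal.ofReal (rho Γ z0 L x y * vv Γ z0 L b t y) * μ A := hsum
      _ ≤ ∑ y ∈ box z0 L, μ (B y) := Finset.sum_le_sum key
      _ = μ (⋃ y ∈ box z0 L, B y) := hunion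
      _ ≤ μ (A ∩ {ω | ∃ m ≤ t + 1, S (n + m) ω = b}) := measure_mono hsub

end Bridge



lemma Mtot_le (hN : 1 ≤ Fintype.card W) (z0 : ℤ) (L : ℕ) :
    ∑ x ∈ (box z0 L : Finset (ℤ × W)), deg2 Γ x
      ≤ (2 * L + 1 : ℝ) * (Fintype.card W) * (Fintype.card W + 1) := by
  have h1 : ∑ x ∈ (box z0 L : Finset (ℤ × W)), deg2 Γ x
      = ∑ z ∈ Finset.Icc (z0 - L) (z0 + L), ∑ γ : W, ((Γ.degree γ : ℝ) + 2) := by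
    rw [box, Finset.sum_product]
    rfl
  have h2 : ∑ γ : W, ((Γ.degree γ : ℝ) + 2)
      ≤ (Fintype.card W : ℝ) * (Fintype.card W + 1) := by
    calc ∑ γ : W, ((Γ.degree γ : ℝ) + 2)
        ≤ ∑ _γ : W, ((Fintype.card W : ℝ) + 1) := by
          refine Finset.sum_le_sum fun γ _ => ?_
          have hle : Γ.degree γ + 1 ≤ Fintype.card W := Γ.degree_lt_card_verts γ
          have : (Γ.degree γ : ℝ) + 1 ≤ (Fintype.card W : ℝ) := by exact_mod_cast hle
          linarith
      _ = (Fintype.card W : ℝ) * (Fintype.card W + 1) := by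
          rw [Finset.sum_const, Finset.card_univ, nsmul_eq_mul]
  have hcard : ((Finset.Icc (z0 - L) (z0 + L)).card : ℝ) = 2 * L + 1 := by
    rw [Int.card_Icc]
    have : z0 + L + 1 - (z0 - L) = 2 * L + 1 := by ring
    rw [this]
    have : ((2 * L + 1 : ℤ)).toNat = 2 * L + 1 := by omega
    rw [this]
    push_cast
    ring
  calc ∑ x ∈ (box z0 L : Finset (ℤ × W)), deg2 Γ x
      = ∑ z ∈ Finset.Icc (z0 - L) (z0 + L), ∑ γ : W, ((Γ.degree γ : ℝ) + 2) := h1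
    _ ≤ ∑ z ∈ Finset.Icc (z0 - L) (z0 + L), (Fintype.card W : ℝ) * (Fintype.card W + 1) :=
        Finset.sum_le_sum fun z _ => h2
    _ = (2 * L + 1 : ℝ) * (Fintype.card W) * (Fintype.card W + 1) := by
        rw [Finset.sum_const, nsmul_eq_mul, hcard]; ring

end Stmt3Aux

open Stmt3Aux

/-- **Hitting a vertex on the same level.** For the simple random walk on `ℤ × Γ` (with `Γ` a
finite connected graph) started at `a`, and any `b` with the same `ℤ`-coordinate as `a`,
`P_a(H_b ≤ 4⁶|Γ|⁶) ≥ 1/2`. -/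
theorem stmt3 {W : Type*} [Fintype W] [Nonempty W] [MeasurableSpace W]
    [MeasurableSingletonClass W]
    (Γ : SimpleGraph W) (hΓ : Γ.Connected)
    {Ω : Type*} [MeasurableSpace Ω] (μ : Measure Ω) [IsProbabilityMeasure μ]
    (S : ℕ → Ω → ℤ × W) (hmeas : ∀ n, Measurable (S n))
    (a b : ℤ × W) (hab : a.1 = b.1)
    (h0 : ∀ ω, S 0 ω = a)
    (hwalk : ∀ (n : ℕ) (w : Fin (n+1) → ℤ × W) (y : ℤ × W),
      μ {ω | (∀ k : Fin (n+1), S k ω = w k) ∧ S (n+1) ω = y}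
        = μ {ω | ∀ k : Fin (n+1), S k ω = w k}
          * ENNReal.ofReal
            ((if (cylGraph Γ).Adj (w (Fin.last n)) y then 1 else 0)
              / (Γ.degree (w (Fin.last n)).2 + 2))) :
    (1 : ℝ≥0∞)/2 ≤ μ {ω | ∃ n ≤ 4^6 * (Fintype.card W)^6, S n ω = b} := by
  classical
  obtain ⟨a1, a2⟩ := a
  obtain ⟨b1, b2⟩ := b
  have hab' : a1 = b1 := hab
  subst hab'
  set N : ℕ := Fintype.card W with hNdef
  have hN1 : 1 ≤ N := Fintype.card_pos
  set L : ℕ := 256 * N^3 with hLdef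
  have hLpos : 0 < L := by positivity
  set T : ℕ := 4^6 * N^6 with hTdef
  set n : ℝ := (N : ℝ) with hn
  have hn1 : (1:ℝ) ≤ n := by rw [hn]; exact_mod_cast hN1
  have hTr : (T : ℝ) = 4096 * n^6 := by rw [hTdef, hn]; push_cast; norm_num
  have hLr : (L : ℝ) = 256 * n^3 := by rw [hLdef, hn]; push_cast; norm_num
  have hTpos : (0:ℝ) < T := by rw [hTr]; positivity
  -- membership facts
  have hamem : ((a1, a2) : ℤ × W) ∈ (box a1 L : Finset (ℤ × W)) := by
    rw [mem_box]; constructor <;> simp <;> omega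
  -- step 1 : sv bound via the walk
  have hsv : sv Γ a1 L (a1, b2) T (a1, a2) ≤ 1/4 := by
    obtain ⟨p⟩ := hΓ.preconnected a2 b2
    have hpath := p.bypass_isPath
    have hlen : (p.bypass.length : ℝ) ≤ n - 1 := by
      have hlt : p.bypass.length < N := by rw [hNdef]; exact hpath.length_lt
      have hcast : (p.bypass.length : ℝ) + 1 ≤ (N:ℝ) := by exact_mod_cast hlt
      rw [hn]
      linarith
    have hw := hT_walk Γ a1 L hLpos p.bypass T
    have hM := Mtot_le Γ hN1 a1 L
    have hMnonneg : (0:ℝ) ≤ ∑ x ∈ (box a1 L : Finset (ℤ × W)), deg2 Γ x :=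
      Finset.sum_nonneg fun x _ => (deg2_pos Γ x).le
    have hdiv := sv_le_hT_div Γ a1 L hLpos (a1, b2) T hamem
    have hchain : (T:ℝ) * sv Γ a1 L (a1, b2) T (a1, a2)
        ≤ (n - 1) * ((2 * L + 1 : ℝ) * n * (n + 1)) := by
      calc (T:ℝ) * sv Γ a1 L (a1, b2) T (a1, a2)
          ≤ hT Γ a1 L (a1, b2) T (a1, a2) := hdiv
        _ ≤ p.bypass.length * ∑ x ∈ (box a1 L : Finset (ℤ × W)), deg2 Γ x := hw
        _ ≤ (n - 1) * ((2 * L + 1 : ℝ) * n * (n + 1)) := by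
            have h1 : (p.bypass.length : ℝ) * (∑ x ∈ (box a1 L : Finset (ℤ × W)), deg2 Γ x)
                ≤ (n - 1) * (∑ x ∈ (box a1 L : Finset (ℤ × W)), deg2 Γ x) :=
              mul_le_mul_of_nonneg_right hlen hMnonneg
            have h2 : (n - 1) * (∑ x ∈ (box a1 L : Finset (ℤ × W)), deg2 Γ x)
                ≤ (n - 1) * ((2 * L + 1 : ℝ) * n * (n + 1)) :=
              mul_le_mul_of_nonneg_left (by rw [hn, hNdef]; exact hM) (by linarith)
            linarith
    have hnum : (n - 1) * ((2 * L + 1 : ℝ) * n * (n + 1)) ≤ (T:ℝ) / 4 := by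
      rw [hLr, hTr]
      nlinarith [sq_nonneg n, pow_le_pow_left₀ (by linarith : (0:ℝ) ≤ 1) hn1 3,
        one_le_pow₀ hn1 (n := 3), one_le_pow₀ hn1 (n := 6),
        pow_le_pow_right₀ hn1 (show 3 ≤ 6 by norm_num),
        mul_pos (show (0:ℝ) < n from by linarith) (show (0:ℝ) < n from by linarith)]
    have h4 : (T:ℝ) * sv Γ a1 L (a1, b2) T (a1, a2) ≤ (T:ℝ) * (1/4) := by linarith
    exact (mul_le_mul_iff_right₀ hTpos).1 h4
  -- step 2 : uu bound
  have huu : uu Γ a1 L T (a1, a2) ≤ 1/16 := by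
    have h := uu_le Γ a1 L hLpos T (a1, a2) hamem
    have hz : (((a1, a2).1 - a1 : ℤ) : ℝ)^2 = 0 := by simp
    rw [hz, zero_add] at h
    have hL2 : ((L:ℝ))^2 = 16 * (T:ℝ) := by rw [hLr, hTr]; ring
    rw [hL2] at h
    nlinarith [hTpos]
  -- step 3 : vv lower bound
  have hvv : 1/2 ≤ vv Γ a1 L (a1, b2) T (a1, a2) := by
    have h := vv_ge Γ a1 L hLpos (a1, b2) T (a1, a2) hamem
    linarith
  -- step 4 : bridge
  have hbr := bridge μ S Γ (a1, b2) a1 L hLpos hmeas hwalk T 0 (fun _ => (a1, a2))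
  have hcyl : {ω | ∀ k : Fin (0+1), S k ω = (fun _ => ((a1, a2) : ℤ × W)) k} = Set.univ := by
    apply Set.eq_univ_of_forall
    intro ω k
    have hk : (k : ℕ) = 0 := by omega
    show S (k : ℕ) ω = _
    rw [hk]
    exact h0 ω
  rw [hcyl, measure_univ, mul_one, Set.univ_inter] at hbr
  have hev : {ω | ∃ m ≤ T, S (0 + m) ω = ((a1, b2) : ℤ × W)}
      = {ω | ∃ m ≤ T, S m ω = ((a1, b2) : ℤ × W)} := by
    simp only [Nat.zero_add]
  rw [hev] at hbr
  refine le_trans ?_ hbr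
  have h12 : (1:ℝ≥0∞)/2 = ENNReal.ofReal (1/2) := by
    rw [ENNReal.ofReal_div_of_pos (by norm_num), ENNReal.ofReal_one]
    norm_num
  rw [h12]
  exact ENNReal.ofReal_le_ofReal (by simpa using hvv)
end

section
/- Let A be a finite connected graph and fix three vertices a, b, z ∈ A. Let i be a flow from a to {b, z} such that i(a,x) ≥ 0, i(z,x) ≤ 0, and i(b,x) ≤ 0 for all x, and such that i has no cycle (no directed cycle of edges all carrying strictly positive flow). Then there exists a flow j on A from a to b such that: (a) j(x,b) = i(x,b) for all x, so j has strength i(b); (b) j(x,z) = 0 for all x; (c) i(x,y)·j(x,y) ≥ 0 for all x,y; (d) |j(x,y)| ≤ |i(x,y)| for all x,y; (e) |j(x,y)| ≤ i(b) for all x,y. -/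
open Finset Relation

lemma aux_path6 {α : Type*} {r : α → α → Prop} :
    ∀ {u w : α}, TransGen r u w →
      ∃ (n : ℕ) (c : ℕ → α), 0 < n ∧ c 0 = u ∧ c n = w ∧ ∀ k < n, r (c k) (c (k+1)) := by
  intro u w h
  induction h with
  | single h =>
    rename_i w'
    exact ⟨1, fun k => if k = 0 then u else w', Nat.one_pos, by simp, by simp, by
      intro k hk; interval_cases k; simpa using h⟩
  | tail h' step ih =>
    rename_i v' w'
    obtain ⟨n, c, hn, h0, hnw, he⟩ := ih
    refine ⟨n+1, fun k => if k = n+1 then w' else c k, Nat.succ_pos n, ?_, by simp, ?_⟩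
    · simpa using h0
    · intro k hk
      rcases Nat.lt_or_ge k n with hkn | hkn
      · simp only [if_neg (by omega : ¬ k = n+1), if_neg (by omega : ¬ k+1 = n+1)]
        exact he k hkn
      · have hkeq : k = n := by omega
        subst hkeq
        simp only [if_neg (by omega : ¬ k = k+1), if_pos rfl]
        rw [hnw]; exact step

lemma aux_cycle6 {α : Type*} {r : α → α → Prop} {v : α} (h : TransGen r v v) :
    ∃ (n : ℕ) (c : ℕ → α), 0 < n ∧ c 0 = c n ∧ ∀ k < n, r (c k) (c (k+1)) := by
  obtain ⟨n, c, hn, h0, hnw, he⟩ := aux_path6 h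
  exact ⟨n, c, hn, by rw [h0, hnw], he⟩

/-- **Flow decomposition lemma.** Let `i` be a flow from `a` to `{b, z}` on a finite connected
graph, with `a` a source and `b, z` sinks, and with no (strictly positive) directed cycle.
Then there is a flow `j` from `a` to `b` which matches `i` on the edges into `b`, puts nothing
into `z`, has the same direction as `i` on each edge, and satisfies `|j| ≤ |i|` edgewise and
`|j| ≤ i(b)` (the strength of `j`). -/
theorem stmt6 {V : Type*} [Fintype V]
    (G : SimpleGraph V) (hconn : G.Connected)
    (a b z : V) (hab : a ≠ b) (haz : a ≠ z) (hbz : b ≠ z)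
    (i : V → V → ℝ)
    (hskew : ∀ x y, i x y = - i y x)
    (hsupp : ∀ x y, ¬ G.Adj x y → i x y = 0)
    (hnode : ∀ x, x ≠ a → x ≠ b → x ≠ z → ∑ y, i x y = 0)
    (hsrc : ∀ x, 0 ≤ i a x)
    (hsinkz : ∀ x, i z x ≤ 0)
    (hsinkb : ∀ x, i b x ≤ 0)
    (hnocycle : ¬ ∃ (n : ℕ) (c : ℕ → V), 0 < n ∧ c 0 = c n ∧ ∀ k < n, 0 < i (c k) (c (k+1))) :
    ∃ j : V → V → ℝ,
      (∀ x y, j x y = - j y x) ∧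
      (∀ x y, ¬ G.Adj x y → j x y = 0) ∧
      (∀ x, x ≠ a → x ≠ b → ∑ y, j x y = 0) ∧
      (∀ x, j x b = i x b) ∧
      (∀ x, j x z = 0) ∧
      (∀ x y, 0 ≤ i x y * j x y) ∧
      (∀ x y, |j x y| ≤ |i x y|) ∧
      (∀ x y, |j x y| ≤ ∑ u, i u b) := by
  classical
  -- well-foundedness of the reversed positive-flow relation
  have hwf : WellFounded (fun y x : V => 0 < i x y) := by
    haveI h1 : IsTrans V (TransGen (fun y x : V => 0 < i x y)) :=
      ⟨fun _ _ _ h1 h2 => h1.trans h2⟩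
    haveI h2 : IsIrrefl V (TransGen (fun y x : V => 0 < i x y)) := by
      constructor
      intro v hv
      have hv' : TransGen (fun u v : V => 0 < i u v) v v :=
        Relation.transGen_swap.mp hv
      exact hnocycle (aux_cycle6 hv')
    refine Subrelation.wf ?_
      (Finite.wellFounded_of_trans_of_irrefl (TransGen (fun y x : V => 0 < i x y)))
    intro x y h
    exact TransGen.single h
  have hsum_eq : ∀ (x : V) (q : V → ℝ),
      ∑ y ∈ univ.filter (fun y => 0 < i x y), i x y * q y = ∑ y, max (i x y) 0 * q y := by
    intro x q
    rw [Finset.sum_filter]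
    apply Finset.sum_congr rfl
    intro y _
    by_cases h : 0 < i x y
    · simp [h, max_eq_left h.le]
    · simp [h, max_eq_right (not_lt.mp h)]
  -- existence of the hitting-probability function p
  have hpex : ∃ p : V → ℝ, p b = 1 ∧
      (∀ x, x ≠ b → p x = (∑ y, max (i x y) 0 * p y) / (∑ y, max (i x y) 0)) := by
    refine ⟨hwf.fix (fun x rec => if x = b then 1 else
      (∑ y ∈ (univ.filter fun y => 0 < i x y).attach,
        i x y.1 * rec y.1 (mem_filter.mp y.2).2) / (∑ y, max (i x y) 0)), ?_, ?_⟩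
    · rw [WellFounded.fix_eq]; simp
    · intro x hx
      rw [WellFounded.fix_eq, if_neg hx]
      congr 1
      beta_reduce
      exact (Finset.sum_attach _ _).trans (hsum_eq x _)
  obtain ⟨p, hpb, hpe⟩ := hpex
  have hD0 : ∀ x : V, 0 ≤ ∑ y, max (i x y) 0 :=
    fun x => Finset.sum_nonneg fun y _ => le_max_right _ _
  have hp01 : ∀ x, 0 ≤ p x ∧ p x ≤ 1 := by
    intro x
    refine hwf.induction (C := fun x => 0 ≤ p x ∧ p x ≤ 1) x ?_
    intro x ih
    by_cases hx : x = b
    · subst hx; rw [hpb]; norm_num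
    · rw [hpe x hx]
      have hN0 : 0 ≤ ∑ y, max (i x y) 0 * p y := by
        apply Finset.sum_nonneg
        intro y _
        rcases lt_or_ge 0 (i x y) with h | h
        · exact mul_nonneg (le_max_right _ _) (ih y h).1
        · rw [max_eq_right h]; simp
      have hN1 : ∑ y, max (i x y) 0 * p y ≤ ∑ y, max (i x y) 0 := by
        apply Finset.sum_le_sum
        intro y _
        rcases lt_or_ge 0 (i x y) with h | h
        · calc max (i x y) 0 * p y ≤ max (i x y) 0 * 1 :=
              mul_le_mul_of_nonneg_left (ih y h).2 (le_max_right _ _)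
            _ = max (i x y) 0 := mul_one _
        · rw [max_eq_right h]; simp
      exact ⟨div_nonneg hN0 (hD0 x), div_le_one_of_le₀ hN1 (hD0 x)⟩
  have hpz : p z = 0 := by
    rw [hpe z (Ne.symm hbz)]
    have h0 : ∑ y, max (i z y) 0 * p y = 0 :=
      Finset.sum_eq_zero fun y _ => by rw [max_eq_right (hsinkz y), zero_mul]
    rw [h0, zero_div]
  have hph : ∀ x, x ≠ b →
      (∑ y, max (i x y) 0) * p x = ∑ y, max (i x y) 0 * p y := by
    intro x hx
    rw [hpe x hx]
    rcases eq_or_ne (∑ y, max (i x y) 0) 0 with h0 | h0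
    · rw [h0, zero_mul]
      have hz0 : ∀ y, max (i x y) 0 = 0 := fun y =>
        (Finset.sum_eq_zero_iff_of_nonneg (fun y _ => le_max_right (i x y) 0)).mp h0 y
          (Finset.mem_univ y)
      symm; exact Finset.sum_eq_zero fun y _ => by rw [hz0 y, zero_mul]
    · rw [mul_comm, div_mul_cancel₀ _ h0]
  have hsplit : ∀ x y, i x y = max (i x y) 0 - max (i y x) 0 := by
    intro x y
    have hs := hskew x y
    rcases le_total (i x y) 0 with h | h
    · rw [max_eq_right h, max_eq_left (by linarith)]; linarith
    · rw [max_eq_left h, max_eq_right (by linarith)]; linarith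
  have hio : ∀ x, x ≠ a → x ≠ b → x ≠ z →
      ∑ y, max (i y x) 0 = ∑ y, max (i x y) 0 := by
    intro x h1 h2 h3
    have h := hnode x h1 h2 h3
    have h4 : ∑ y, (max (i x y) 0 - max (i y x) 0) = ∑ y, i x y :=
      Finset.sum_congr rfl fun y _ => (hsplit x y).symm
    rw [Finset.sum_sub_distrib] at h4
    linarith
  -- the flow j
  set j : V → V → ℝ := fun x y => max (i x y) 0 * p y - max (i y x) 0 * p x with hj
  have hjskew : ∀ x y, j x y = - j y x := by
    intro x y; simp only [hj]; ring
  have hjsupp : ∀ x y, ¬ G.Adj x y → j x y = 0 := by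
    intro x y h
    have h1 := hsupp x y h
    have h2 := hsupp y x (fun h' => h h'.symm)
    simp [hj, h1, h2]
  have hjb : ∀ x, j x b = i x b := by
    intro x
    have h1 : max (i b x) 0 = 0 := max_eq_right (hsinkb x)
    have h2 : 0 ≤ i x b := by have := hskew b x; linarith [hsinkb x]
    simp [hj, h1, hpb, max_eq_left h2]
  have hjz : ∀ x, j x z = 0 := by
    intro x
    simp [hj, hpz, max_eq_right (hsinkz x)]
  have hjle : ∀ x y, 0 < i x y → 0 ≤ j x y ∧ j x y ≤ i x y := by
    intro x y h
    have h1 : max (i x y) 0 = i x y := max_eq_left h.le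
    have h2 : max (i y x) 0 = 0 := max_eq_right (by have := hskew x y; linarith)
    have hje : j x y = i x y * p y := by
      simp only [hj]; rw [h1, h2]; ring
    constructor
    · rw [hje]; exact mul_nonneg h.le (hp01 y).1
    · rw [hje]
      calc i x y * p y ≤ i x y * 1 := mul_le_mul_of_nonneg_left (hp01 y).2 h.le
        _ = i x y := mul_one _
  have hjzero : ∀ x y, i x y = 0 → j x y = 0 := by
    intro x y h
    have h2 : i y x = 0 := by have := hskew x y; linarith
    simp [hj, h, h2]
  have hjnonpos : ∀ x y, i x y ≤ 0 → j x y ≤ 0 := by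
    intro x y h
    rcases h.lt_or_eq with h' | h'
    · have h2 : 0 < i y x := by have := hskew x y; linarith
      have h3 := (hjle y x h2).1
      rw [hjskew x y]; linarith
    · exact le_of_eq (hjzero x y h')
  have hjposi : ∀ u v, 0 < j u v → 0 < i u v := by
    intro u v h
    by_contra hc
    push_neg at hc
    exact absurd h (not_lt.mpr (hjnonpos u v hc))
  have hsign : ∀ x y, 0 ≤ i x y * j x y := by
    intro x y
    rcases lt_trichotomy (i x y) 0 with h | h | h
    · have h2 : 0 < i y x := by have := hskew x y; linarith
      have heq : i x y * j x y = i y x * j y x := by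
        rw [hskew x y, hjskew x y]; ring
      rw [heq]
      exact mul_nonneg h2.le (hjle y x h2).1
    · rw [h, zero_mul]
    · exact mul_nonneg h.le (hjle x y h).1
  have habs : ∀ x y, |j x y| ≤ |i x y| := by
    have key : ∀ x y, 0 < i x y → |j x y| ≤ |i x y| := by
      intro x y h
      rw [abs_of_nonneg (hjle x y h).1, abs_of_nonneg h.le]
      exact (hjle x y h).2
    intro x y
    rcases lt_trichotomy (i x y) 0 with h | h | h
    · rw [hjskew x y, hskew x y, abs_neg, abs_neg]
      exact key y x (by have := hskew x y; linarith)
    · simp [hjzero x y h, h]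
    · exact key x y h
  have hjnode : ∀ x, x ≠ a → x ≠ b → ∑ y, j x y = 0 := by
    intro x hxa hxb
    by_cases hxz : x = z
    · subst hxz
      apply Finset.sum_eq_zero
      intro y _
      simp [hj, hpz, max_eq_right (hsinkz y)]
    · have h1 := hph x hxb
      have h2 := hio x hxa hxb hxz
      have h3 : ∑ y, j x y =
          (∑ y, max (i x y) 0 * p y) - (∑ y, max (i y x) 0) * p x := by
        simp only [hj]
        rw [Finset.sum_sub_distrib, Finset.sum_mul]
      rw [h3, ← h1, h2]
      ring
  have hstr0 : (0:ℝ) ≤ ∑ u, i u b :=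
    Finset.sum_nonneg fun u _ => by have := hskew u b; linarith [hsinkb u]
  have hkey : ∀ x y, j x y ≤ ∑ u, i u b := by
    intro x₀ y₀
    rcases le_or_gt (j x₀ y₀) 0 with hle | hpos
    · linarith
    set R : Finset V :=
      univ.filter (fun v => ReflTransGen (fun u v => 0 < j u v) y₀ v) with hR
    have hyR : y₀ ∈ R := by
      rw [hR, mem_filter]; exact ⟨mem_univ _, ReflTransGen.refl⟩
    have hclosed : ∀ u v, u ∈ R → 0 < j u v → v ∈ R := by
      intro u v hu huv
      rw [hR, mem_filter] at hu ⊢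
      exact ⟨mem_univ _, hu.2.tail huv⟩
    have hxR : x₀ ∉ R := by
      intro hx
      rw [hR, mem_filter] at hx
      have htg : TransGen (fun u v => 0 < j u v) x₀ x₀ := TransGen.head' hpos hx.2
      exact hnocycle (aux_cycle6 (TransGen.mono hjposi _ _ htg))
    have hnotR : ∀ v, (∀ u, j u v ≤ 0) → v ≠ y₀ → v ∉ R := by
      intro v hv hvy hmem
      rw [hR, mem_filter] at hmem
      rcases hmem.2.cases_tail with h | ⟨c, _, hc⟩
      · exact hvy h
      · exact absurd hc (not_lt.mpr (hv c))
    have haR : a ∉ R := by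
      apply hnotR
      · intro u
        exact hjnonpos u a (by have := hskew a u; linarith [hsrc u])
      · intro h; rw [← h] at hpos
        have : j x₀ a ≤ 0 := hjnonpos x₀ a (by have := hskew a x₀; linarith [hsrc x₀])
        linarith
    have hzR : z ∉ R := by
      apply hnotR
      · intro u; exact le_of_eq (hjz u)
      · intro h; rw [← h] at hpos
        have := hjz x₀; linarith
    have hRR : ∑ u ∈ R, ∑ v ∈ R, j u v = 0 := by
      have h2 : (∑ u ∈ R, ∑ v ∈ R, j u v) + (∑ u ∈ R, ∑ v ∈ R, j u v) = 0 := by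
        nth_rewrite 2 [Finset.sum_comm]
        rw [← Finset.sum_add_distrib]
        apply Finset.sum_eq_zero; intro u _
        rw [← Finset.sum_add_distrib]
        apply Finset.sum_eq_zero; intro v _
        rw [hjskew u v]; ring
      linarith
    have hrow : ∑ u ∈ R, ∑ v, j u v = ∑ u ∈ R, ∑ v ∈ Rᶜ, j u v := by
      have hsplit2 : ∀ u : V, ∑ v, j u v = ∑ v ∈ R, j u v + ∑ v ∈ Rᶜ, j u v :=
        fun u => (Finset.sum_add_sum_compl R _).symm
      rw [Finset.sum_congr rfl (fun u _ => hsplit2 u), Finset.sum_add_distrib, hRR, zero_add]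
    have hterm : ∀ u ∈ R, ∀ v ∈ Rᶜ, j u v ≤ 0 := by
      intro u hu v hv
      by_contra hc
      push_neg at hc
      exact (Finset.mem_compl.mp hv) (hclosed u v hu hc)
    have hcut : ∑ u ∈ R, ∑ v ∈ Rᶜ, j u v ≤ - j x₀ y₀ := by
      have hxc : x₀ ∈ Rᶜ := Finset.mem_compl.mpr hxR
      have h1 : ∑ v ∈ Rᶜ, j y₀ v ≤ j y₀ x₀ := by
        have heq := Finset.add_sum_erase Rᶜ (fun v => j y₀ v) hxc
        have h3 : ∑ v ∈ Rᶜ.erase x₀, j y₀ v ≤ 0 :=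
          Finset.sum_nonpos fun v hv => hterm y₀ hyR v (Finset.mem_of_mem_erase hv)
        linarith
      have h2 : ∑ u ∈ R, ∑ v ∈ Rᶜ, j u v ≤ ∑ v ∈ Rᶜ, j y₀ v := by
        have heq := Finset.add_sum_erase R (fun u => ∑ v ∈ Rᶜ, j u v) hyR
        have h3 : ∑ u ∈ R.erase y₀, ∑ v ∈ Rᶜ, j u v ≤ 0 :=
          Finset.sum_nonpos fun u hu => Finset.sum_nonpos fun v hv =>
            hterm u (Finset.mem_of_mem_erase hu) v hv
        linarith
      have h4 : j y₀ x₀ = - j x₀ y₀ := hjskew y₀ x₀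
      linarith
    by_cases hbR : b ∈ R
    · have hrows : ∑ u ∈ R, ∑ v, j u v = - ∑ u, i u b := by
        rw [Finset.sum_eq_single_of_mem b hbR]
        · have h5 : ∀ v : V, j b v = -(i v b) := fun v => by rw [hjskew b v, hjb v]
          rw [Finset.sum_congr rfl (fun v _ => h5 v), Finset.sum_neg_distrib]
        · intro u hu hub
          exact hjnode u (fun h => haR (h ▸ hu)) hub
      linarith [hcut, hrow, hrows]
    · have hrows : ∑ u ∈ R, ∑ v, j u v = 0 :=
        Finset.sum_eq_zero fun u hu =>
          hjnode u (fun h => haR (h ▸ hu)) (fun h => hbR (h ▸ hu))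
      exfalso; linarith [hcut, hrow, hrows]
  have habs2 : ∀ x y, |j x y| ≤ ∑ u, i u b := by
    intro x y
    rw [abs_le]
    refine ⟨?_, hkey x y⟩
    have h1 := hkey y x
    have h2 := hjskew x y
    linarith
  exact ⟨j, hjskew, hjsupp, hjnode, hjb, hjz, hsign, habs, habs2⟩
end

section
/- Let (X_n) be a process on ℤ≥0 started at a point in (0, ∞), and suppose there is a constant q ≤ 2^{−10} such that almost surely, for every sufficiently large x, on the event that the process reaches level x, the conditional probability of reaching level 2x before returning to level 0 is at most q. Then almost surely the process returns to level 0 after reaching any positive level; i.e., sup of levels reached before returning to 0 is a.s. finite, being stochastically bounded by 2 raised to a geometric random variable. -/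
open MeasureTheory
open scoped ENNReal

/-- **Recurrence from a uniform gambler's ruin estimate.** Let `(X n)` be a process on the
nonnegative integers started at a positive point. If there is `q ≤ 2⁻¹⁰` such that for every
sufficiently large `x`, the probability of reaching level `2x` before returning to `0` is at
most `q` times the probability of reaching level `x` before returning to `0`, then almost
surely the supremum of the levels reached before returning to `0` is finite. -/
theorem stmt17 {Ω : Type*} [MeasurableSpace Ω] (μ : Measure Ω) [IsProbabilityMeasure μ]
    (X : ℕ → Ω → ℕ) (hmeas : ∀ n, Measurable (X n))
    (h0 : ∀ ω, 0 < X 0 ω)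
    (q : ℝ≥0∞) (hq : q ≤ (2:ℝ≥0∞)⁻¹ ^ 10)
    (x₀ : ℕ)
    (hgr : ∀ x, x₀ ≤ x →
      μ {ω | ∃ n, 2*x ≤ X n ω ∧ ∀ m ≤ n, X m ω ≠ 0}
        ≤ q * μ {ω | ∃ n, x ≤ X n ω ∧ ∀ m ≤ n, X m ω ≠ 0}) :
    μ {ω | ∃ M : ℕ, ∀ n, (∀ m ≤ n, X m ω ≠ 0) → X n ω ≤ M} = 1 := by
  set S : ℕ → Set Ω := fun x => {ω | ∃ n, x ≤ X n ω ∧ ∀ m ≤ n, X m ω ≠ 0} with hS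
  set T : Set Ω := {ω | ∃ M : ℕ, ∀ n, (∀ m ≤ n, X m ω ≠ 0) → X n ω ≤ M} with hT
  set x₁ : ℕ := max x₀ 1 with hx₁
  -- complement of T is contained in each S x
  have hsub : ∀ x : ℕ, Tᶜ ⊆ S x := by
    intro x ω hω
    simp only [hT, Set.mem_compl_iff, Set.mem_setOf_eq, not_exists, not_forall] at hω
    obtain ⟨n, hn, hgt⟩ := hω x
    exact ⟨n, by omega, hn⟩
  -- bound at dyadic levels
  have hbound : ∀ k : ℕ, μ (S (2 ^ k * x₁)) ≤ q ^ k := by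
    intro k
    induction k with
    | zero =>
      simpa using prob_le_one (μ := μ)
    | succ k ih =>
      have hx : x₀ ≤ 2 ^ k * x₁ := by
        have : x₀ ≤ x₁ := le_max_left _ _
        have h1 : 1 ≤ 2 ^ k := Nat.one_le_two_pow
        nlinarith
      have := hgr (2 ^ k * x₁) hx
      have heq : 2 ^ (k + 1) * x₁ = 2 * (2 ^ k * x₁) := by ring
      rw [heq]
      calc μ (S (2 * (2 ^ k * x₁))) ≤ q * μ (S (2 ^ k * x₁)) := this
        _ ≤ q * q ^ k := by gcongr
        _ = q ^ (k + 1) := (pow_succ' q k).symm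
  have hTc : ∀ k : ℕ, μ Tᶜ ≤ q ^ k := fun k =>
    le_trans (measure_mono (hsub _)) (hbound k)
  have hq1 : q < 1 := by
    have h1 : (2:ℝ≥0∞)⁻¹ < 1 := by simp [ENNReal.inv_lt_one]
    calc q ≤ (2:ℝ≥0∞)⁻¹ ^ 10 := hq
      _ ≤ (2:ℝ≥0∞)⁻¹ ^ 1 := pow_le_pow_of_le_one zero_le h1.le (by norm_num)
      _ = (2:ℝ≥0∞)⁻¹ := pow_one _
      _ < 1 := h1
  have h0' : μ Tᶜ = 0 := by
    have htend : Filter.Tendsto (fun k : ℕ => q ^ k) Filter.atTop (nhds 0) :=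
      ENNReal.tendsto_pow_atTop_nhds_zero_of_lt_one hq1
    have := le_of_tendsto_of_tendsto' (tendsto_const_nhds (x := μ Tᶜ)) htend hTc
    simpa using this
  have hunion : (1 : ℝ≥0∞) ≤ μ T + μ Tᶜ := by
    have : μ (T ∪ Tᶜ) ≤ μ T + μ Tᶜ := measure_union_le _ _
    simpa [Set.union_compl_self] using this
  rw [h0', add_zero] at hunion
  exact le_antisymm prob_le_one hunion
end
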